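/- Let M be an NMDS matrix of order n over a finite field F_{2^r}. Then every row and every column of M contains at most one zero entry; consequently M has at least n^2 - n nonzero entries. -/

import Mathlib

open Matrix

/-- The Hamming weight of a vector: the number of nonzero coordinates. -/
def wt {F : Type*} [Zero F] [DecidableEq F] {n : ℕ} (x : Fin n → F) : ℕ :=
  (Finset.univ.filter fun i => x i ≠ 0).card

/-- The differential branch number of a square matrix `M`:
the minimum of `wt x + wt (M x)` over all nonzero vectors `x`. -/
noncomputable def branchD {F : Type*} [Field F] [DecidableEq F] {n : ℕ}
    (M : Matrix (Fin n) (Fin n) F) : ℕ :=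
  sInf {k | ∃ x : Fin n → F, x ≠ 0 ∧ k = wt x + wt (M.mulVec x)}

/-- The linear branch number of a square matrix `M`:
the minimum of `wt x + wt (Mᵀ x)` over all nonzero vectors `x`. -/
noncomputable def branchL {F : Type*} [Field F] [DecidableEq F] {n : ℕ}
    (M : Matrix (Fin n) (Fin n) F) : ℕ :=
  sInf {k | ∃ x : Fin n → F, x ≠ 0 ∧ k = wt x + wt (Mᵀ.mulVec x)}

/-- A square matrix of order `n` is near-MDS (NMDS) if both its differential
and linear branch numbers equal `n`. -/
def IsNMDS {F : Type*} [Field F] [DecidableEq F] {n : ℕ}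
    (M : Matrix (Fin n) (Fin n) F) : Prop :=
  branchD M = n ∧ branchL M = n
/-- The number of nonzero entries of a matrix. -/
def nonzeroEntries {F : Type*} [Zero F] [DecidableEq F] {n : ℕ}
    (M : Matrix (Fin n) (Fin n) F) : ℕ :=
  (Finset.univ.filter fun p : Fin n × Fin n => M p.1 p.2 ≠ 0).card

/-- An NMDS matrix of order n over a finite field of characteristic 2 has at most one
zero entry in every row and every column, hence at least n² − n nonzero entries. -/

lemma wt_single {F : Type*} [Field F] [DecidableEq F] {n : ℕ} (j : Fin n) :
    wt (Pi.single j (1 : F)) = 1 := by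
  unfold wt
  have : (Finset.univ.filter fun i => (Pi.single j (1 : F) : Fin n → F) i ≠ 0) = {j} := by
    ext i
    simp only [Finset.mem_filter, Finset.mem_univ, true_and, Finset.mem_singleton]
    rcases eq_or_ne i j with h | h
    · subst h; simp
    · simp [Pi.single_eq_of_ne h, h]
  rw [this, Finset.card_singleton]

lemma wt_add_zeros {F : Type*} [Field F] [DecidableEq F] {n : ℕ} (x : Fin n → F) :
    (Finset.univ.filter fun i => x i = 0).card + wt x = n := by
  unfold wt
  rw [Finset.card_filter_add_card_filter_not, Finset.card_univ, Fintype.card_fin]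

lemma col_zeros {F : Type*} [Field F] [DecidableEq F] {n : ℕ}
    (M : Matrix (Fin n) (Fin n) F) (hD : branchD M = n) (j : Fin n) :
    (Finset.univ.filter fun i => M i j = 0).card ≤ 1 := by
  have hx : (Pi.single j (1 : F) : Fin n → F) ≠ 0 := by
    intro h
    have := congrFun h j
    simp at this
  have hmem : wt (Pi.single j (1:F)) + wt (M.mulVec (Pi.single j (1:F))) ∈
      {k | ∃ x : Fin n → F, x ≠ 0 ∧ k = wt x + wt (M.mulVec x)} :=
    ⟨_, hx, rfl⟩
  have hle : n ≤ wt (Pi.single j (1:F)) + wt (M.mulVec (Pi.single j (1:F))) := by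
    have h : branchD M ≤ wt (Pi.single j (1:F)) + wt (M.mulVec (Pi.single j (1:F))) :=
      Nat.sInf_le hmem
    omega
  have hmv : M.mulVec (Pi.single j (1:F)) = fun i => M i j := by
    funext i
    rw [Matrix.mulVec_single]
    exact mul_one _
  rw [wt_single, hmv] at hle
  have h2 := wt_add_zeros (fun i => M i j)
  omega

theorem stmt_0 {F : Type*} [Field F] [Fintype F] [DecidableEq F] [CharP F 2]
    {n : ℕ} (M : Matrix (Fin n) (Fin n) F) (hM : IsNMDS M) :
    (∀ i, (Finset.univ.filter fun j => M i j = 0).card ≤ 1) ∧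
    (∀ j, (Finset.univ.filter fun i => M i j = 0).card ≤ 1) ∧
    n ^ 2 - n ≤ nonzeroEntries M := by
  have h1 : ∀ i, (Finset.univ.filter fun j => M i j = 0).card ≤ 1 := by
    intro i
    have := col_zeros Mᵀ hM.2 i
    exact this
  have h2 : ∀ j, (Finset.univ.filter fun i => M i j = 0).card ≤ 1 :=
    col_zeros M hM.1
  refine ⟨h1, h2, ?_⟩
  have hzeros : (Finset.univ.filter fun p : Fin n × Fin n => M p.1 p.2 = 0).card ≤ n := by
    have : (Finset.univ.filter fun p : Fin n × Fin n => M p.1 p.2 = 0).card ≤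
        (Finset.univ : Finset (Fin n)).card :=
      Finset.card_le_card_of_injOn Prod.fst (fun _ _ => Finset.mem_univ _) (by
        intro p hp q hq hfst
        simp only [Finset.coe_filter, Set.mem_setOf_eq, Finset.mem_univ, true_and] at hp hq
        have hp2 : p.2 ∈ Finset.univ.filter fun j => M p.1 j = 0 := by
          simp [hp]
        have hq2 : q.2 ∈ Finset.univ.filter fun j => M p.1 j = 0 := by
          simp only [Finset.mem_filter, Finset.mem_univ, true_and]
          rw [hfst]; exact hq
        have hcard := h1 p.1
        have := Finset.card_le_one.mp hcard _ hp2 _ hq2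
        exact Prod.ext hfst this)
    simpa using this
  have htot : (Finset.univ.filter fun p : Fin n × Fin n => M p.1 p.2 = 0).card +
      nonzeroEntries M = n ^ 2 := by
    unfold nonzeroEntries
    rw [Finset.card_filter_add_card_filter_not, Finset.card_univ]
    simp [sq]
  omega
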